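/- arXiv:1911.11171 — 2 statements merged into one kernel-verified Lean document; each statement's English description precedes it below -/
import Mathlib

section
/- Let (M,b) be a linear constraint system over ℤ_d where d is prime. Then (M,b) admits a quantum solution on some nonzero complex Hilbert space if and only if the element J of the solution group 𝒢(M,b) is not equal to the identity element. -/
/-- ω = exp(2πi/d). -/
noncomputable def rootOfUnity (d : ℕ) : ℂ := Complex.exp (2 * Real.pi * Complex.I / d)

/-- A quantum solution to the linear constraint system `(M, b)` over `ℤ_d` on a complex
Hilbert space `H`: bounded operators `A i` with `A i ^ d = 1`, commuting whenever two
variables appear in a common constraint, and with `∏ j, A j ^ M i j = ω ^ b i • 1` for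
every row `i`. -/
def IsQuantumSolution (d : ℕ) {m n : ℕ} (M : Matrix (Fin m) (Fin n) (ZMod d))
    (b : Fin m → ZMod d) {H : Type} [NormedAddCommGroup H] [InnerProductSpace ℂ H]
    (A : Fin n → H →L[ℂ] H) : Prop :=
  (∀ i, A i ^ d = 1) ∧
  (∀ j k : Fin n, (∃ i, M i j ≠ 0 ∧ M i k ≠ 0) → Commute (A j) (A k)) ∧
  (∀ i : Fin m, (List.ofFn fun j => A j ^ (M i j).val).prod
      = rootOfUnity d ^ (b i).val • (1 : H →L[ℂ] H))

/-- `(M,b)` admits a quantum solution on some nonzero complex Hilbert space. -/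
def HasQuantumSolution (d : ℕ) {m n : ℕ} (M : Matrix (Fin m) (Fin n) (ZMod d))
    (b : Fin m → ZMod d) : Prop :=
  ∃ (H : Type) (_ : NormedAddCommGroup H) (_ : InnerProductSpace ℂ H)
    (_ : CompleteSpace H) (_ : Nontrivial H) (A : Fin n → H →L[ℂ] H),
    IsQuantumSolution d M b A

/-- The defining relations of the solution group of the LCS `(M,b)` over `ℤ_d`, on the
generators `none = J` and `some i = gᵢ`:  `J^d = gᵢ^d = e`, `J` is central,
`g_j g_k = g_k g_j` whenever variables `j,k` share a constraint, and
`J^{-bᵢ} ∏_j g_j^{M i j} = e` for every row `i`. -/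
def lcsRels (d : ℕ) {m n : ℕ} (M : Matrix (Fin m) (Fin n) (ZMod d)) (b : Fin m → ZMod d) :
    Set (FreeGroup (Option (Fin n))) :=
  {w | (∃ x : Option (Fin n), w = FreeGroup.of x ^ d) ∨
    (∃ i : Fin n, w = FreeGroup.of (none : Option (Fin n)) * FreeGroup.of (some i) *
        (FreeGroup.of (none : Option (Fin n)))⁻¹ * (FreeGroup.of (some i))⁻¹) ∨
    (∃ j k : Fin n, (∃ i, M i j ≠ 0 ∧ M i k ≠ 0) ∧
        w = FreeGroup.of (some j) * FreeGroup.of (some k) *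
          (FreeGroup.of (some j))⁻¹ * (FreeGroup.of (some k))⁻¹) ∨
    (∃ i : Fin m, w = (FreeGroup.of (none : Option (Fin n)) ^ (b i).val)⁻¹ *
        (List.ofFn fun j => FreeGroup.of (some j) ^ (M i j).val).prod)}

/-- The solution group `𝒢(M,b)`; `PresentedGroup.of none` is `J` and
`PresentedGroup.of (some i)` is the generator `gᵢ`. -/
abbrev SolutionGroup (d : ℕ) {m n : ℕ} (M : Matrix (Fin m) (Fin n) (ZMod d))
    (b : Fin m → ZMod d) := PresentedGroup (lcsRels d M b)

open scoped ENNReal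

set_option maxHeartbeats 1000000
set_option synthInstance.maxHeartbeats 1000000

namespace LCSAux

lemma memℓp_comp_equiv {α β : Type*} (e : α ≃ β) {f : β → ℂ} {p : ℝ≥0∞}
    (hf : Memℓp f p) : Memℓp (fun x => f (e x)) p := by
  rcases p.trichotomy with rfl | rfl | hp
  · refine memℓp_zero ?_
    have h : {x | f (e x) ≠ 0} = e ⁻¹' {y | f y ≠ 0} := rfl
    rw [h]
    exact (memℓp_zero_iff.mp hf).preimage e.injective.injOn
  · refine memℓp_infty ?_
    have h := e.surjective.range_comp (g := fun y => ‖f y‖)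
    rw [Function.comp_def] at h
    rw [h]
    exact memℓp_infty_iff.mp hf
  · exact memℓp_gen ((e.summable_iff (f := fun y => ‖f y‖ ^ p.toReal)).mpr (hf.summable hp))

variable (G : Type*) [Group G]

/-- The left-translation by `g` on `ℓ²(G)`, as a function. -/
noncomputable def transFun (g : G) (f : lp (fun _ : G => ℂ) 2) : lp (fun _ : G => ℂ) 2 :=
  ⟨fun x => f (g⁻¹ * x), memℓp_comp_equiv (Equiv.mulLeft g⁻¹) (lp.memℓp f)⟩

@[simp] lemma transFun_apply (g : G) (f : lp (fun _ : G => ℂ) 2) (x : G) :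
    (transFun G g f : ∀ _ : G, ℂ) x = f (g⁻¹ * x) := rfl

lemma norm_transFun (g : G) (f : lp (fun _ : G => ℂ) 2) : ‖transFun G g f‖ = ‖f‖ := by
  have h2 : 0 < (2 : ℝ≥0∞).toReal := by norm_num
  rw [lp.norm_eq_tsum_rpow h2, lp.norm_eq_tsum_rpow h2]
  congr 1
  exact (Equiv.mulLeft g⁻¹).tsum_eq (fun y => ‖f y‖ ^ (2 : ℝ≥0∞).toReal)

/-- Left translation by `g` on `ℓ²(G)` as a continuous linear map. -/
noncomputable def transCLM (g : G) : lp (fun _ : G => ℂ) 2 →L[ℂ] lp (fun _ : G => ℂ) 2 :=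
  LinearMap.mkContinuous
    { toFun := transFun G g
      map_add' := fun f₁ f₂ => lp.ext (by
        funext x
        simp only [transFun_apply, lp.coeFn_add, Pi.add_apply])
      map_smul' := fun c f => lp.ext (by
        funext x
        simp only [transFun_apply, lp.coeFn_smul, Pi.smul_apply, RingHom.id_apply]) }
    1 (fun f => by rw [one_mul]; exact (norm_transFun G g f).le)

@[simp] lemma transCLM_apply (g : G) (f : lp (fun _ : G => ℂ) 2) (x : G) :
    (transCLM G g f : ∀ _ : G, ℂ) x = f (g⁻¹ * x) := rfl

lemma transCLM_mul (g h : G) : transCLM G (g * h) = transCLM G g * transCLM G h := by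
  ext f x
  simp [ContinuousLinearMap.mul_apply, mul_assoc]

lemma transCLM_one : transCLM G 1 = 1 := by
  ext f x
  simp

lemma transCLM_single [DecidableEq G] (g y : G) (c : ℂ) :
    transCLM G g (lp.single 2 y c) = lp.single 2 (g * y) c := by
  apply lp.ext
  funext x
  rw [transCLM_apply]
  rcases eq_or_ne x (g * y) with rfl | hx
  · have h : g⁻¹ * (g * y) = y := by group
    rw [lp.single_apply_self, h, lp.single_apply_self]
  · have hne : g⁻¹ * x ≠ y := fun h => hx (by rw [← h]; group)
    rw [lp.single_apply_ne _ _ _ hx, lp.single_apply_ne _ _ _ hne]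

variable {G}

noncomputable def eigV (c : ℂ) (J : G) : Submodule ℂ (lp (fun _ : G => ℂ) 2) :=
  LinearMap.ker ((transCLM G J - c • (1 : lp (fun _ : G => ℂ) 2 →L[ℂ] lp (fun _ : G => ℂ) 2) :
    lp (fun _ : G => ℂ) 2 →L[ℂ] lp (fun _ : G => ℂ) 2) : lp (fun _ : G => ℂ) 2 →ₗ[ℂ] lp (fun _ : G => ℂ) 2)

lemma mem_eigV {c : ℂ} {J : G} {f : lp (fun _ : G => ℂ) 2} :
    f ∈ eigV c J ↔ transCLM G J f = c • f := by
  rw [eigV, LinearMap.mem_ker, ContinuousLinearMap.coe_coe, ContinuousLinearMap.sub_apply, ContinuousLinearMap.smul_apply,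
    ContinuousLinearMap.one_apply, sub_eq_zero]

instance (c : ℂ) (J : G) : CompleteSpace (eigV c J) :=
  (ContinuousLinearMap.isClosed_ker _).completeSpace_coe

lemma eigV_invariant {c : ℂ} {J : G} (hJc : ∀ γ : G, Commute J γ) (γ : G)
    {f : lp (fun _ : G => ℂ) 2} (hf : f ∈ eigV c J) : transCLM G γ f ∈ eigV c J := by
  rw [mem_eigV] at hf ⊢
  have h1 : transCLM G J * transCLM G γ = transCLM G γ * transCLM G J := by
    rw [← transCLM_mul, ← transCLM_mul, (hJc γ).eq]
  calc transCLM G J (transCLM G γ f) = (transCLM G J * transCLM G γ) f := rfl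
    _ = (transCLM G γ) (transCLM G J f) := by rw [h1]; rfl
    _ = c • transCLM G γ f := by rw [hf, map_smul]

noncomputable def resE (c : ℂ) (J : G) (hJc : ∀ γ : G, Commute J γ) (γ : G) :
    eigV c J →L[ℂ] eigV c J :=
  ((transCLM G γ).comp (eigV c J).subtypeL).codRestrict (eigV c J)
    (fun x => eigV_invariant hJc γ x.2)

lemma resE_apply_coe (c : ℂ) (J : G) (hJc : ∀ γ : G, Commute J γ) (γ : G) (x : eigV c J) :
    ((resE c J hJc γ x : lp (fun _ : G => ℂ) 2)) = transCLM G γ x := rfl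

lemma resE_one (c : ℂ) (J : G) (hJc : ∀ γ : G, Commute J γ) :
    resE c J hJc 1 = 1 := by
  refine ContinuousLinearMap.ext fun x => Subtype.ext ?_
  rw [resE_apply_coe, transCLM_one]
  rfl

lemma resE_mul (c : ℂ) (J : G) (hJc : ∀ γ : G, Commute J γ) (γ₁ γ₂ : G) :
    resE c J hJc (γ₁ * γ₂) = resE c J hJc γ₁ * resE c J hJc γ₂ := by
  refine ContinuousLinearMap.ext fun x => Subtype.ext ?_
  rw [ContinuousLinearMap.mul_apply, resE_apply_coe, resE_apply_coe, resE_apply_coe,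
    transCLM_mul]
  rfl

lemma resE_pow (c : ℂ) (J : G) (hJc : ∀ γ : G, Commute J γ) (γ : G) (k : ℕ) :
    resE c J hJc (γ ^ k) = resE c J hJc γ ^ k := by
  induction k with
  | zero => rw [pow_zero, pow_zero, resE_one]
  | succ k ih => rw [pow_succ, pow_succ, resE_mul, ih]

lemma resE_list_prod (c : ℂ) (J : G) (hJc : ∀ γ : G, Commute J γ) (l : List G) :
    resE c J hJc l.prod = (l.map (resE c J hJc)).prod := by
  induction l with
  | nil => simp [resE_one]
  | cons a l ih => simp [resE_mul, ih]

lemma resE_J (c : ℂ) (J : G) (hJc : ∀ γ : G, Commute J γ) :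
    resE c J hJc J = c • 1 := by
  refine ContinuousLinearMap.ext fun x => Subtype.ext ?_
  rw [resE_apply_coe, mem_eigV.mp x.2]
  rfl

lemma eigV_nontrivial [DecidableEq G] {d : ℕ} (hd : d.Prime) {J : G} (hJd : J ^ d = 1)
    (hJ1 : J ≠ 1) : Nontrivial (eigV (rootOfUnity d) J) := by
  haveI : Fact d.Prime := ⟨hd⟩
  haveI : NeZero d := ⟨hd.ne_zero⟩
  haveI : Fact (1 < d) := ⟨hd.one_lt⟩
  have hordJ : orderOf J = d := orderOf_eq_prime hJd hJ1
  set ω := rootOfUnity d with hωdef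
  have hω : IsPrimitiveRoot ω d := Complex.isPrimitiveRoot_exp d hd.ne_zero
  have hωd : ω ^ d = 1 := hω.pow_eq_one
  have hωne : ω ≠ 0 := hω.ne_zero hd.ne_zero
  have hJpow : ∀ k : ZMod d, J ^ ((k + 1 : ZMod d).val) = J * J ^ k.val := by
    intro k
    rw [ZMod.val_add, ZMod.val_one, ← pow_eq_pow_mod _ hJd, pow_succ']
  have hωpow : ∀ k : ZMod d, ω ^ ((k + 1 : ZMod d).val) = ω * ω ^ k.val := by
    intro k
    rw [ZMod.val_add, ZMod.val_one, ← pow_eq_pow_mod _ hωd, pow_succ']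
  set δ : ZMod d → lp (fun _ : G => ℂ) 2 := fun k => lp.single 2 (J ^ k.val) 1 with hδdef
  set f₀ : lp (fun _ : G => ℂ) 2 := ∑ k : ZMod d, (ω ^ k.val)⁻¹ • δ k with hf₀def
  have hmem : f₀ ∈ eigV ω J := by
    rw [mem_eigV, hf₀def, map_sum]
    have hterm : ∀ k : ZMod d, transCLM G J ((ω ^ k.val)⁻¹ • δ k)
        = (ω ^ k.val)⁻¹ • δ (k + 1) := by
      intro k
      rw [map_smul]
      congr 1
      rw [hδdef]
      show transCLM G J (lp.single 2 (J ^ k.val) 1) = lp.single 2 (J ^ ((k + 1 : ZMod d).val)) 1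
      rw [transCLM_single, ← hJpow k]
    rw [Finset.sum_congr rfl (fun k _ => hterm k), Finset.smul_sum]
    refine Fintype.sum_equiv (Equiv.addRight (1 : ZMod d)) _ _ ?_
    intro k
    show (ω ^ k.val)⁻¹ • δ (k + 1) = ω • ((ω ^ ((k + 1 : ZMod d).val))⁻¹ • δ (k + 1))
    rw [smul_smul]
    congr 1
    rw [hωpow k, mul_inv, ← mul_assoc, mul_inv_cancel₀ hωne, one_mul]
  have hδone : ∀ k : ZMod d, (δ k : ∀ _ : G, ℂ) 1 = if k = 0 then 1 else 0 := by
    intro k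
    rw [hδdef]
    rcases eq_or_ne k 0 with rfl | hk
    · simp only [ZMod.val_zero, pow_zero, if_pos rfl]
      exact lp.single_apply_self _ _ _
    · rw [if_neg hk]
      have hne : (1 : G) ≠ J ^ k.val := by
        intro h
        have : J ^ k.val = J ^ 0 := by rw [pow_zero, ← h]
        rw [pow_inj_mod, hordJ, Nat.mod_eq_of_lt (ZMod.val_lt k), Nat.zero_mod] at this
        exact hk ((ZMod.val_eq_zero k).mp this)
      exact lp.single_apply_ne _ _ _ hne
  have hne : f₀ ≠ 0 := by
    intro h0
    have h1 : (f₀ : ∀ _ : G, ℂ) 1 = 0 := by rw [h0]; rfl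
    have h2 : (f₀ : ∀ _ : G, ℂ) 1 = 1 := by
      rw [hf₀def]
      have hcoe := lp.coeFn_sum (fun k : ZMod d => (ω ^ k.val)⁻¹ • δ k) Finset.univ
      rw [hcoe, Finset.sum_apply]
      have : ∀ k : ZMod d, ((ω ^ k.val)⁻¹ • δ k : lp (fun _ : G => ℂ) 2) (1 : G)
          = (ω ^ k.val)⁻¹ * (δ k : ∀ _ : G, ℂ) 1 := fun k => rfl
      rw [Finset.sum_congr rfl (fun k _ => this k)]
      rw [Finset.sum_congr rfl (fun k _ => by rw [hδone k])]
      simp only [mul_ite, mul_one, mul_zero]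
      rw [Finset.sum_ite_eq' Finset.univ (0 : ZMod d) (fun k => (ω ^ k.val)⁻¹)]
      simp
    rw [h1] at h2
    exact one_ne_zero h2.symm
  exact ⟨⟨f₀, hmem⟩, 0, fun h => hne (congrArg Subtype.val h)⟩

theorem hasQuantumSolution_of_J_ne_one {d m n : ℕ} {M : Matrix (Fin m) (Fin n) (ZMod d)}
    {b : Fin m → ZMod d} (hd : d.Prime)
    (hJ : (PresentedGroup.of (none : Option (Fin n)) : SolutionGroup d M b) ≠ 1) :
    HasQuantumSolution d M b := by
  classical
  set J : SolutionGroup d M b := PresentedGroup.of none with hJdef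
  have relOne : ∀ r ∈ lcsRels d M b, PresentedGroup.mk (lcsRels d M b) r = 1 := fun r hr =>
    (QuotientGroup.eq_one_iff _).mpr (Subgroup.subset_normalClosure hr)
  have hpow : ∀ x : Option (Fin n), (PresentedGroup.of x : SolutionGroup d M b) ^ d = 1 := by
    intro x
    have h := relOne _ (Or.inl ⟨x, rfl⟩)
    rwa [map_pow] at h
  have hJg : ∀ i : Fin n, Commute J (PresentedGroup.of (some i)) := by
    intro i
    have h := relOne _ (Or.inr (Or.inl ⟨i, rfl⟩))
    simp only [map_mul, map_inv] at h
    exact commutatorElement_eq_one_iff_commute.mp h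
  have hgg : ∀ j k : Fin n, (∃ i, M i j ≠ 0 ∧ M i k ≠ 0) →
      Commute (PresentedGroup.of (some j) : SolutionGroup d M b) (PresentedGroup.of (some k)) := by
    intro j k hjk
    have h := relOne _ (Or.inr (Or.inr (Or.inl ⟨j, k, hjk, rfl⟩)))
    simp only [map_mul, map_inv] at h
    exact commutatorElement_eq_one_iff_commute.mp h
  have hrow : ∀ i : Fin m,
      (List.ofFn fun j => (PresentedGroup.of (some j) : SolutionGroup d M b) ^ (M i j).val).prod
        = J ^ (b i).val := by
    intro i
    have h := relOne _ (Or.inr (Or.inr (Or.inr ⟨i, rfl⟩)))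
    rw [map_mul, map_inv, map_pow, map_list_prod, List.map_ofFn] at h
    have hfn : (⇑(PresentedGroup.mk (lcsRels d M b)) ∘ fun j => FreeGroup.of (some j) ^ (M i j).val)
        = fun j => (PresentedGroup.of (some j) : SolutionGroup d M b) ^ (M i j).val := by
      funext j
      simp only [Function.comp_apply, map_pow]
      rfl
    rw [hfn] at h
    exact (inv_mul_eq_one.mp h).symm
  have hJcentral : ∀ γ : SolutionGroup d M b, Commute J γ := by
    intro γ
    have hγ : γ ∈ Subgroup.centralizer {J} := by
      refine PresentedGroup.generated_by _ _ ?_ γ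
      intro x
      rw [Subgroup.mem_centralizer_iff]
      intro g hg
      rw [Set.mem_singleton_iff] at hg
      subst hg
      match x with
      | none => rfl
      | some i => exact (hJg i).eq
    exact Subgroup.mem_centralizer_iff.mp hγ J rfl
  haveI hnt : Nontrivial (eigV (rootOfUnity d) J) := eigV_nontrivial hd (hpow none) hJ
  letI i1 : NormedAddCommGroup ↥(eigV (rootOfUnity d) J) := inferInstance
  letI i2 : InnerProductSpace ℂ ↥(eigV (rootOfUnity d) J) := inferInstance
  letI i3 : CompleteSpace ↥(eigV (rootOfUnity d) J) := inferInstance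
  refine ⟨↥(eigV (rootOfUnity d) J), i1, i2, i3, hnt,
    fun i => resE (rootOfUnity d) J hJcentral (PresentedGroup.of (some i)), ?_, ?_, ?_⟩
  · intro i
    rw [← resE_pow, hpow (some i), resE_one]
  · intro j k hjk
    show _ * _ = _ * _
    rw [← resE_mul, ← resE_mul, (hgg j k hjk).eq]
  · intro i
    have hfn : (resE (rootOfUnity d) J hJcentral ∘
          fun j => (PresentedGroup.of (some j) : SolutionGroup d M b) ^ (M i j).val)
        = fun j => resE (rootOfUnity d) J hJcentral (PresentedGroup.of (some j)) ^ (M i j).val := by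
      funext j
      exact resE_pow _ _ _ _ _
    have h1 : (List.ofFn fun j =>
          resE (rootOfUnity d) J hJcentral (PresentedGroup.of (some j)) ^ (M i j).val)
        = List.map (resE (rootOfUnity d) J hJcentral)
            (List.ofFn fun j => (PresentedGroup.of (some j) : SolutionGroup d M b) ^ (M i j).val) := by
      rw [List.map_ofFn, hfn]
    rw [h1, ← resE_list_prod, hrow i, resE_pow, resE_J, smul_pow, one_pow]

theorem J_ne_one_of_hasQuantumSolution {d m n : ℕ} {M : Matrix (Fin m) (Fin n) (ZMod d)}
    {b : Fin m → ZMod d} (hd : d.Prime)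
    (hQ : HasQuantumSolution d M b) :
    (PresentedGroup.of (none : Option (Fin n)) : SolutionGroup d M b) ≠ 1 := by
  obtain ⟨H, _, _, _, _, A, hA1, hA2, hA3⟩ := hQ
  have hd0 : d ≠ 0 := hd.ne_zero
  have hdpos : 0 < d := hd.pos
  let ω := rootOfUnity d
  have hω : IsPrimitiveRoot ω d := Complex.isPrimitiveRoot_exp d hd0
  have hωd : ω ^ d = 1 := hω.pow_eq_one
  have hωne : ω ≠ 0 := hω.ne_zero hd0
  -- units
  have hAinv : ∀ i, A i * A i ^ (d - 1) = 1 := fun i => by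
    rw [← pow_succ']; rw [Nat.sub_add_cancel hdpos]; exact hA1 i
  have hAinv' : ∀ i, A i ^ (d - 1) * A i = 1 := fun i => by
    rw [← pow_succ]; rw [Nat.sub_add_cancel hdpos]; exact hA1 i
  let u : Fin n → (H →L[ℂ] H)ˣ := fun i => ⟨A i, A i ^ (d - 1), hAinv i, hAinv' i⟩
  let uJ : (H →L[ℂ] H)ˣ := ⟨ω • 1, ω⁻¹ • 1, by
      rw [smul_mul_assoc, mul_smul_comm, smul_smul, one_mul, mul_inv_cancel₀ hωne, one_smul], by
      rw [smul_mul_assoc, mul_smul_comm, smul_smul, one_mul, inv_mul_cancel₀ hωne, one_smul]⟩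
  let f : Option (Fin n) → (H →L[ℂ] H)ˣ := fun x => x.elim uJ u
  have hcomm : ∀ y : (H →L[ℂ] H)ˣ, Commute uJ y := by
    intro y
    have : (uJ : H →L[ℂ] H) * y = y * uJ := by
      show (ω • 1 : H →L[ℂ] H) * y = y * (ω • 1)
      rw [smul_mul_assoc, mul_smul_comm, one_mul, mul_one]
    exact Units.ext this
  have hrels : ∀ r ∈ lcsRels d M b, FreeGroup.lift f r = 1 := by
    rintro r (⟨x, rfl⟩ | ⟨i, rfl⟩ | ⟨j, k, hjk, rfl⟩ | ⟨i, rfl⟩)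
    · rw [map_pow, FreeGroup.lift_apply_of]
      apply Units.ext
      rw [Units.val_pow_eq_pow_val, Units.val_one]
      match x with
      | none => show (ω • 1 : H →L[ℂ] H) ^ d = 1; rw [smul_pow, one_pow, hωd, one_smul]
      | some i => exact hA1 i
    · simp only [map_mul, map_inv, FreeGroup.lift_apply_of]
      exact commutatorElement_eq_one_iff_commute.mpr (hcomm (u i))
    · simp only [map_mul, map_inv, FreeGroup.lift_apply_of]
      apply commutatorElement_eq_one_iff_commute.mpr
      exact Units.ext (hA2 j k hjk)
    · rw [map_mul, map_inv, map_pow, FreeGroup.lift_apply_of]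
      have hprod : FreeGroup.lift f (List.ofFn fun j => FreeGroup.of (some j) ^ (M i j).val).prod
          = (List.ofFn fun j => u j ^ (M i j).val).prod := by
        rw [map_list_prod, List.map_ofFn]
        have hfn : ((FreeGroup.lift f) ∘ fun j => FreeGroup.of (some j) ^ (M i j).val)
            = fun j => u j ^ (M i j).val := by
          funext j
          simp only [Function.comp_apply, map_pow, FreeGroup.lift_apply_of]
          rfl
        rw [hfn]
      rw [hprod]
      have hval : ((List.ofFn fun j => u j ^ (M i j).val).prod : H →L[ℂ] H)
          = ((uJ ^ (b i).val : (H →L[ℂ] H)ˣ) : H →L[ℂ] H) := by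
        rw [← Units.coeHom_apply, map_list_prod, List.map_ofFn]
        have hfn : ((Units.coeHom (H →L[ℂ] H)) ∘ fun j => u j ^ (M i j).val)
            = fun j => A j ^ (M i j).val := by
          funext j
          simp only [Function.comp_apply, Units.coeHom_apply, Units.val_pow_eq_pow_val]
          rfl
        rw [hfn, hA3 i, Units.val_pow_eq_pow_val]
        show _ = (ω • 1 : H →L[ℂ] H) ^ (b i).val
        rw [smul_pow, one_pow]
      have huJP : uJ ^ (b i).val = (List.ofFn fun j => u j ^ (M i j).val).prod :=
        Units.ext hval.symm
      show (uJ ^ (b i).val)⁻¹ * _ = 1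
      rw [← huJP, inv_mul_cancel]
  intro hJ
  have hφ := PresentedGroup.toGroup.of hrels (x := (none : Option (Fin n)))
  rw [hJ, map_one] at hφ
  have huJ1 : (ω • (1 : H →L[ℂ] H)) = 1 := by
    have h2 : (f none : H →L[ℂ] H) = ((1 : (H →L[ℂ] H)ˣ) : H →L[ℂ] H) :=
      congrArg Units.val hφ.symm
    exact h2.trans Units.val_one
  obtain ⟨x, hx⟩ := exists_ne (0 : H)
  have : (ω • (1 : H →L[ℂ] H)) x = (1 : H →L[ℂ] H) x := by rw [huJ1]
  simp only [ContinuousLinearMap.smul_apply, ContinuousLinearMap.one_apply] at this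
  have hsub : (ω - 1) • x = 0 := by rw [sub_smul, one_smul, this, sub_self]
  rcases smul_eq_zero.mp hsub with h | h
  · exact absurd h (sub_ne_zero_of_ne ((Complex.isPrimitiveRoot_exp d hd0).ne_one hd.one_lt))
  · exact hx h

end LCSAux

/-- Cleve et al.: for `d` prime, the LCS `(M,b)` over `ℤ_d` admits a
quantum solution on some nonzero complex Hilbert space iff the element `J` of the
solution group `𝒢(M,b)` is not the identity. -/



theorem hasQuantumSolution_iff_J_ne_one (d : ℕ) (hd : d.Prime) {m n : ℕ}
    (M : Matrix (Fin m) (Fin n) (ZMod d)) (b : Fin m → ZMod d) :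
    HasQuantumSolution d M b ↔
      (PresentedGroup.of (none : Option (Fin n)) : SolutionGroup d M b) ≠ 1 := by
  exact ⟨LCSAux.J_ne_one_of_hasQuantumSolution hd, LCSAux.hasQuantumSolution_of_J_ne_one hd⟩
end

section
/- Let d > 2 be prime and let (M,b) be a linear constraint system over ℤ_d of magic-square form: variables x_1,…,x_9 with constraints a_1x_1+a_2x_2+a_3x_3=b_1, a_4x_4+a_5x_5+a_6x_6=b_2, a_7x_7+a_8x_8+a_9x_9=b_3, a_1'x_1+a_4'x_4+a_7'x_7=b_4, a_2'x_2+a_5'x_5+a_8'x_8=b_5, a_3'x_3+a_6'x_6+a_9'x_9=b_6, where all coefficients a_i, a_i' are nonzero elements of ℤ_d. Then (M,b) admits a quantum solution on some nonzero complex Hilbert space if and only if it has a classical solution. -/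
/-- The coefficient matrix of the generalized magic square LCS: rows are the constraints
`a₁x₁+a₂x₂+a₃x₃ = b₁`, `a₄x₄+a₅x₅+a₆x₆ = b₂`, `a₇x₇+a₈x₈+a₉x₉ = b₃`,
`a₁'x₁+a₄'x₄+a₇'x₇ = b₄`, `a₂'x₂+a₅'x₅+a₈'x₈ = b₅`, `a₃'x₃+a₆'x₆+a₉'x₉ = b₆`. -/
def magicSquareMatrix {d : ℕ} (a a' : Fin 9 → ZMod d) : Matrix (Fin 6) (Fin 9) (ZMod d) :=
  Matrix.of
    ![![a 0, a 1, a 2, 0, 0, 0, 0, 0, 0],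
      ![0, 0, 0, a 3, a 4, a 5, 0, 0, 0],
      ![0, 0, 0, 0, 0, 0, a 6, a 7, a 8],
      ![a' 0, 0, 0, a' 3, 0, 0, a' 6, 0, 0],
      ![0, a' 1, 0, 0, a' 4, 0, 0, a' 7, 0],
      ![0, 0, a' 2, 0, 0, a' 5, 0, 0, a' 8]]


section MagicSquareAux

lemma pow_mod_of_pow_eq_one {M : Type*} [Monoid M] {X : M} {d : ℕ} (h : X ^ d = 1) (m : ℕ) :
    X ^ m = X ^ (m % d) := by
  conv_lhs => rw [← Nat.div_add_mod m d]
  rw [pow_add, pow_mul, h, one_pow, one_mul]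

lemma pow_eq_pow_of_cast_eq {M : Type*} [Monoid M] {X : M} {d : ℕ} (h : X ^ d = 1)
    {m n : ℕ} (hc : (m : ZMod d) = (n : ZMod d)) : X ^ m = X ^ n := by
  rw [pow_mod_of_pow_eq_one h m, pow_mod_of_pow_eq_one h n]
  rcases Nat.eq_zero_or_pos d with rfl | hd
  · have : m = n := by exact_mod_cast hc
    rw [this]
  · exact congrArg _ ((ZMod.natCast_eq_natCast_iff m n d).1 hc)

lemma raise3 {R : Type*} [Monoid R] {x y z w : R} (hxy : Commute x y) (hxz : Commute x z)
    (hyz : Commute y z) (h : x * y * z = w) (k : ℕ) : x ^ k * y ^ k * z ^ k = w ^ k := by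
  rw [← hxy.mul_pow, ← (hxz.mul_left hyz).mul_pow, h]

lemma rootOfUnity_pow_d {d : ℕ} (hd : d ≠ 0) : rootOfUnity d ^ d = 1 :=
  (Complex.isPrimitiveRoot_exp d hd).pow_eq_one

lemma rootOfUnity_ne_zero (d : ℕ) : rootOfUnity d ≠ 0 := Complex.exp_ne_zero _

lemma cast_eq_of_rootOfUnity_pow_eq {d : ℕ} (hd : d ≠ 0) {m n : ℕ}
    (h : rootOfUnity d ^ m = rootOfUnity d ^ n) : (m : ZMod d) = (n : ZMod d) := by
  have hprim := Complex.isPrimitiveRoot_exp d hd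
  have hωd : rootOfUnity d ^ d = 1 := rootOfUnity_pow_d hd
  have hdn : n + (d - 1) * n = d * n := by
    cases d with
    | zero => exact absurd rfl hd
    | succ k => simp [Nat.succ_sub_one]; ring
  have h1 : rootOfUnity d ^ (m + (d - 1) * n) = 1 := by
    rw [pow_add, h, ← pow_add, hdn, pow_mul, hωd, one_pow]
  have hdvd : d ∣ m + (d - 1) * n := (IsPrimitiveRoot.pow_eq_one_iff_dvd hprim _).1 h1
  have h0 : ((m + (d - 1) * n : ℕ) : ZMod d) = 0 := (ZMod.natCast_eq_zero_iff _ _).2 hdvd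
  have hd1 : ((d - 1 : ℕ) : ZMod d) = -1 := by
    rw [Nat.cast_sub (Nat.one_le_iff_ne_zero.2 hd)]
    simp [ZMod.natCast_self]
  push_cast [hd1] at h0
  linear_combination h0

-- classical ⇒ quantum
lemma hasQuantumSolution_of_classical (d : ℕ) (hd : d.Prime) {m n : ℕ}
    (M : Matrix (Fin m) (Fin n) (ZMod d))
    (b : Fin m → ZMod d) (x : Fin n → ZMod d) (hx : M.mulVec x = b) :
    HasQuantumSolution d M b := by
  haveI : NeZero d := ⟨hd.ne_zero⟩
  set ω := rootOfUnity d with hω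
  have hωd : ω ^ d = 1 := rootOfUnity_pow_d hd.ne_zero
  refine ⟨ℂ, inferInstance, inferInstance, inferInstance, inferInstance,
    fun j => (ω ^ (x j).val) • 1, ?_, ?_, ?_⟩
  · intro i
    rw [smul_pow, one_pow, ← pow_mul]
    rw [pow_eq_pow_of_cast_eq hωd (n := 0) (by push_cast; simp), pow_zero, one_smul]
  · intro j k _
    simp [Commute, SemiconjBy, smul_smul, mul_comm, mul_assoc, mul_left_comm]
  · intro i
    have hexp : ∀ j : Fin n, ((ω ^ (x j).val) • (1:ℂ →L[ℂ] ℂ)) ^ (M i j).val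
        = (ω ^ ((x j) * (M i j)).val) • 1 := by
      intro j
      rw [smul_pow, one_pow, ← pow_mul]
      congr 1
      refine pow_eq_pow_of_cast_eq hωd ?_
      push_cast [ZMod.natCast_val, ZMod.cast_id]
      simp
    have hsum : (List.ofFn fun j => (ω ^ ((x j) * (M i j)).val) • (1:ℂ →L[ℂ] ℂ)).prod
        = (∏ j, ω ^ ((x j) * (M i j)).val) • 1 := by
      calc (List.ofFn fun j => (ω ^ ((x j) * (M i j)).val) • (1:ℂ →L[ℂ] ℂ)).prod
          = (List.ofFn fun j => algebraMap ℂ (ℂ →L[ℂ] ℂ) (ω ^ ((x j) * (M i j)).val)).prod := by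
            simp only [Algebra.algebraMap_eq_smul_one]
        _ = ((List.ofFn fun j => ω ^ ((x j) * (M i j)).val).map (algebraMap ℂ (ℂ →L[ℂ] ℂ))).prod := by
            rw [List.map_ofFn]; rfl
        _ = algebraMap ℂ (ℂ →L[ℂ] ℂ) (List.ofFn fun j => ω ^ ((x j) * (M i j)).val).prod := by
            rw [map_list_prod]
        _ = _ := by rw [List.prod_ofFn]; exact Algebra.algebraMap_eq_smul_one _
    have hfin : (∏ j, ω ^ ((x j) * (M i j)).val) = ω ^ (b i).val := by
      rw [Finset.prod_pow_eq_pow_sum Finset.univ (fun j => ((x j) * (M i j)).val) ω]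
      refine pow_eq_pow_of_cast_eq hωd ?_
      push_cast [ZMod.natCast_val, ZMod.cast_id]
      calc ∑ j, x j * M i j = ∑ j, M i j * x j := by
            exact Finset.sum_congr rfl fun j _ => mul_comm _ _
        _ = b i := by simpa [Matrix.mulVec, dotProduct] using congrFun hx i
    simp only [hexp, hsum, hfin]
    rw [hω]

lemma magic_key {G : Type*} [Group G] (A B C E z : G)
    (hz : ∀ x : G, z * x = x * z)
    (hAB : Commute A B) (hAC : Commute A C) (hBE : Commute B E) (hCE : Commute C E)
    (h1 : B*E*(A*C) = A*C*(B*E)) (h2 : C*E*(A*B) = A*B*(C*E))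
    (h3 : B*E*(A*C) = C*E*(A*B) * z) : z * z = 1 := by
  have hI : C*B = B*C*z := by
    have e1 : A*C*(B*E) = A*B*(C*E)*z := by rw [← h1, h3, h2]
    have e2 : A*(C*(B*E)) = A*(B*(C*(E*z))) := by
      calc A*(C*(B*E)) = A*C*(B*E) := by group
        _ = A*B*(C*E)*z := e1
        _ = A*(B*(C*(E*z))) := by group
    have e3 : C*(B*E) = B*(C*(E*z)) := mul_left_cancel e2
    have e4 : C*B*E = B*C*z*E := by
      calc C*B*E = C*(B*E) := by group
        _ = B*(C*(E*z)) := e3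
        _ = B*(C*(z*E)) := by rw [hz E]
        _ = B*C*z*E := by group
    exact mul_right_cancel e4
  have hII : B*C = C*B*z := by
    have kCBE : Commute (C⁻¹*B) E := (hCE.inv_left).mul_left hBE
    have kCBA : Commute (C⁻¹*B) A := (hAC.symm.inv_left).mul_left hAB.symm
    have e1 : z = (C*E*(A*B))⁻¹ * (B*E*(A*C)) := by rw [h3]; group
    have e2 : (C*E*(A*B))⁻¹ * (B*E*(A*C)) = B⁻¹*C⁻¹*B*C := by
      calc (C*E*(A*B))⁻¹*(B*E*(A*C))
          = B⁻¹*(A⁻¹*(E⁻¹*((C⁻¹*B*E)*(A*C)))) := by group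
        _ = B⁻¹*(A⁻¹*(E⁻¹*((E*(C⁻¹*B))*(A*C)))) := by rw [← kCBE.eq]
        _ = B⁻¹*(A⁻¹*((C⁻¹*B*A)*C)) := by group
        _ = B⁻¹*(A⁻¹*((A*(C⁻¹*B))*C)) := by rw [kCBA.eq]
        _ = B⁻¹*C⁻¹*B*C := by group
    rw [e1, e2]; group
  have e5 : B*C = B*C*z*z := by nth_rewrite 1 [hII]; rw [hI]
  have e6 : B*C*1 = B*C*(z*z) := by rw [mul_one]; conv_lhs => rw [e5, mul_assoc]
  exact (mul_left_cancel (a := B*C) e6).symm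

lemma magic_key2 {G : Type*} [Group G] (g : Fin 3 → Fin 3 → G) (ζ : G) (p q : Fin 3 → ℕ)
    (hζ : ∀ x : G, Commute ζ x)
    (c0001 : Commute (g 0 0) (g 0 1)) (c1011 : Commute (g 1 0) (g 1 1))
    (c0010 : Commute (g 0 0) (g 1 0)) (c0111 : Commute (g 0 1) (g 1 1))
    (c2021 : Commute (g 2 0) (g 2 1)) (c0212 : Commute (g 0 2) (g 1 2))
    (hrow : ∀ i, g i 0 * g i 1 * g i 2 = ζ ^ p i)
    (hcol : ∀ j, g 0 j * g 1 j * g 2 j = ζ ^ q j) :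
    ζ ^ (2 * (p 0 + p 1 + p 2)) = ζ ^ (2 * (q 0 + q 1 + q 2)) := by
  set A := g 0 0; set B := g 0 1; set C := g 1 0; set E := g 1 1
  have slide : ∀ (k : ℕ) (x : G), ζ^k * x = x * ζ^k := fun k x => ((hζ x).pow_left k).eq
  set z : G := ζ ^ (q 0 + q 1 + q 2) * (ζ ^ (p 0 + p 1 + p 2))⁻¹ with hzdef
  have hzc : ∀ x : G, z * x = x * z := fun x =>
    ((((hζ x).pow_left _).mul_left (((hζ x).pow_left _).inv_left)).symm).eq.symm
  have hE : B*E*(A*C) * ζ^(p 2) = g 2 2 * ζ^(q 1) * ζ^(q 0) := by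
    calc B*E*(A*C) * ζ^(p 2)
        = B*E*(A*C) * (g 2 0 * g 2 1 * g 2 2) := by rw [hrow 2]
      _ = B*E*(A*C*g 2 0 * (g 2 1 * g 2 2)) := by group
      _ = B*E*(ζ^(q 0) * (g 2 1 * g 2 2)) := by rw [hcol 0]
      _ = B*E*(g 2 1 * g 2 2 * ζ^(q 0)) := by rw [slide (q 0) (g 2 1 * g 2 2)]
      _ = B*E*g 2 1 * g 2 2 * ζ^(q 0) := by group
      _ = ζ^(q 1) * g 2 2 * ζ^(q 0) := by rw [hcol 1]
      _ = g 2 2 * ζ^(q 1) * ζ^(q 0) := by rw [slide (q 1) (g 2 2)]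
  have hF : C*E*(A*B) * ζ^(q 2) = g 2 2 * ζ^(p 1) * ζ^(p 0) := by
    calc C*E*(A*B) * ζ^(q 2)
        = C*E*(A*B) * (g 0 2 * g 1 2 * g 2 2) := by rw [hcol 2]
      _ = C*E*(A*B*g 0 2 * (g 1 2 * g 2 2)) := by group
      _ = C*E*(ζ^(p 0) * (g 1 2 * g 2 2)) := by rw [hrow 0]
      _ = C*E*(g 1 2 * g 2 2 * ζ^(p 0)) := by rw [slide (p 0) (g 1 2 * g 2 2)]
      _ = C*E*g 1 2 * g 2 2 * ζ^(p 0) := by group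
      _ = ζ^(p 1) * g 2 2 * ζ^(p 0) := by rw [hrow 1]
      _ = g 2 2 * ζ^(p 1) * ζ^(p 0) := by rw [slide (p 1) (g 2 2)]
  have h3 : B*E*(A*C) = C*E*(A*B) * z := by
    apply mul_right_cancel (b := ζ^(p 2) * (ζ^(p 1) * ζ^(p 0))⁻¹ * (ζ^(p 1) * ζ^(p 0)))
    calc B*E*(A*C) * (ζ^(p 2) * (ζ^(p 1) * ζ^(p 0))⁻¹ * (ζ^(p 1) * ζ^(p 0)))
        = B*E*(A*C) * ζ^(p 2) := by group
      _ = g 2 2 * ζ^(q 1) * ζ^(q 0) := hE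
      _ = g 2 2 * ζ^(p 1) * ζ^(p 0) * (ζ^(q 1) * ζ^(q 0) * (ζ^(p 1) * ζ^(p 0))⁻¹) := by group
      _ = C*E*(A*B) * ζ^(q 2) * (ζ^(q 1) * ζ^(q 0) * (ζ^(p 1) * ζ^(p 0))⁻¹) := by rw [hF]
      _ = C*E*(A*B) * z * (ζ^(p 2) * (ζ^(p 1) * ζ^(p 0))⁻¹ * (ζ^(p 1) * ζ^(p 0))) := by
            rw [hzdef]; group
  have hACi : A*C = ζ^(q 0) * (g 2 0)⁻¹ := by rw [← hcol 0]; group; rfl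
  have hBEi : B*E = ζ^(q 1) * (g 2 1)⁻¹ := by rw [← hcol 1]; group; rfl
  have hABi : A*B = ζ^(p 0) * (g 0 2)⁻¹ := by rw [← hrow 0]; group; rfl
  have hCEi : C*E = ζ^(p 1) * (g 1 2)⁻¹ := by rw [← hrow 1]; group; rfl
  have h1 : B*E*(A*C) = A*C*(B*E) := by
    calc B*E*(A*C) = ζ^(q 1) * (g 2 1)⁻¹ * (ζ^(q 0) * (g 2 0)⁻¹) := by rw [hBEi, hACi]
      _ = ζ^(q 1) * ((g 2 1)⁻¹ * ζ^(q 0)) * (g 2 0)⁻¹ := by group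
      _ = ζ^(q 1) * (ζ^(q 0) * (g 2 1)⁻¹) * (g 2 0)⁻¹ := by
            rw [(slide (q 0) ((g 2 1)⁻¹)).symm]
      _ = ζ^(q 1) * ζ^(q 0) * ((g 2 1)⁻¹ * (g 2 0)⁻¹) := by group
      _ = ζ^(q 1) * ζ^(q 0) * ((g 2 0)⁻¹ * (g 2 1)⁻¹) := by
            rw [(c2021.inv_left.inv_right).eq]
      _ = ζ^(q 0) * ((ζ^(q 1) * (g 2 0)⁻¹) * (g 2 1)⁻¹) := by group
      _ = ζ^(q 0) * (((g 2 0)⁻¹ * ζ^(q 1)) * (g 2 1)⁻¹) := by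
            rw [slide (q 1) ((g 2 0)⁻¹)]
      _ = ζ^(q 0) * (g 2 0)⁻¹ * (ζ^(q 1) * (g 2 1)⁻¹) := by group
      _ = A*C*(B*E) := by rw [← hBEi, ← hACi]
  have h2 : C*E*(A*B) = A*B*(C*E) := by
    calc C*E*(A*B) = ζ^(p 1) * (g 1 2)⁻¹ * (ζ^(p 0) * (g 0 2)⁻¹) := by rw [hCEi, hABi]
      _ = ζ^(p 1) * ((g 1 2)⁻¹ * ζ^(p 0)) * (g 0 2)⁻¹ := by group
      _ = ζ^(p 1) * (ζ^(p 0) * (g 1 2)⁻¹) * (g 0 2)⁻¹ := by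
            rw [(slide (p 0) ((g 1 2)⁻¹)).symm]
      _ = ζ^(p 1) * ζ^(p 0) * ((g 1 2)⁻¹ * (g 0 2)⁻¹) := by group
      _ = ζ^(p 1) * ζ^(p 0) * ((g 0 2)⁻¹ * (g 1 2)⁻¹) := by
            rw [(c0212.inv_left.inv_right).eq]
      _ = ζ^(p 0) * ((ζ^(p 1) * (g 0 2)⁻¹) * (g 1 2)⁻¹) := by group
      _ = ζ^(p 0) * (((g 0 2)⁻¹ * ζ^(p 1)) * (g 1 2)⁻¹) := by
            rw [slide (p 1) ((g 0 2)⁻¹)]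
      _ = ζ^(p 0) * (g 0 2)⁻¹ * (ζ^(p 1) * (g 1 2)⁻¹) := by group
      _ = A*B*(C*E) := by rw [← hCEi, ← hABi]
  have hzz : z * z = 1 := magic_key A B C E z hzc c0001 c0010 c0111 c1011 h1 h2 h3
  calc ζ ^ (2 * (p 0 + p 1 + p 2))
      = (z * z)⁻¹ * ζ ^ (2 * (q 0 + q 1 + q 2)) := by rw [hzdef]; group
    _ = ζ ^ (2 * (q 0 + q 1 + q 2)) := by rw [hzz]; group

lemma exists_solution_of_dual {K : Type*} [Field K] {m n : ℕ}
    (M : Matrix (Fin m) (Fin n) K) (b : Fin m → K)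
    (h : ∀ l : Fin m → K, Matrix.vecMul l M = 0 → dotProduct l b = 0) :
    ∃ x : Fin n → K, M.mulVec x = b := by
  set W := LinearMap.range M.mulVecLin with hW
  suffices hb : b ∈ W by
    obtain ⟨x, hx⟩ := hb
    exact ⟨x, hx⟩
  have : W.mkQ b = 0 := by
    rw [← Module.forall_dual_apply_eq_zero_iff K]
    intro f
    set g : (Fin m → K) →ₗ[K] K := f.comp W.mkQ with hg
    set l : Fin m → K := fun i => g (Pi.single i 1) with hl
    have hgv : ∀ v, g v = dotProduct l v := by
      intro v
      rw [LinearMap.pi_apply_eq_sum_univ g v]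
      have hs : ∀ i : Fin m, (fun j => if i = j then (1:K) else 0) = Pi.single i 1 := by
        intro i; funext j; simp [Pi.single_apply, eq_comm]
      simp only [hs, smul_eq_mul]
      simp [dotProduct, hl, mul_comm]
    have hker : Matrix.vecMul l M = 0 := by
      funext j
      have hmem : M.mulVec (Pi.single j 1) ∈ W := ⟨Pi.single j 1, rfl⟩
      have h0 : W.mkQ (M.mulVec (Pi.single j 1)) = 0 := by
        rw [Submodule.mkQ_apply]
        exact (Submodule.Quotient.mk_eq_zero W).2 hmem
      have : g (M.mulVec (Pi.single j 1)) = 0 := by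
        rw [hg, LinearMap.comp_apply, h0, map_zero]
      rw [hgv] at this
      simpa [Matrix.vecMul, Matrix.mulVec_single, dotProduct, mul_comm] using this
    have := h l hker
    rw [← hgv] at this
    exact this
  have := (Submodule.Quotient.mk_eq_zero W).1 this
  exact this

lemma listOfFn_nine {M : Type*} (f : Fin 9 → M) :
    List.ofFn f = [f 0, f 1, f 2, f 3, f 4, f 5, f 6, f 7, f 8] := by
  simp [List.ofFn_succ, Fin.succ]

def mkUnit {R : Type*} [Monoid R] (x : R) {d : ℕ} (hd : 0 < d) (h : x ^ d = 1) : Rˣ :=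
  ⟨x, x ^ (d - 1),
    by
      rw [← pow_succ']
      have hd1 : d - 1 + 1 = d := by omega
      rw [hd1, h],
    by
      rw [← pow_succ]
      have hd1 : d - 1 + 1 = d := by omega
      rw [hd1, h]⟩

@[simp] lemma mkUnit_val {R : Type*} [Monoid R] (x : R) {d : ℕ} (hd : 0 < d) (h : x ^ d = 1) :
    ((mkUnit x hd h : Rˣ) : R) = x := rfl

end MagicSquareAux

/-- for `d > 2` prime, a magic-square-form LCS over `ℤ_d` with all
coefficients nonzero admits a quantum solution on some nonzero complex Hilbert space iff
it has a classical solution. -/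

theorem magicSquare_quantum_iff_classical (d : ℕ) (hd : d.Prime) (hd2 : 2 < d)
    (a a' : Fin 9 → ZMod d) (ha : ∀ i, a i ≠ 0) (ha' : ∀ i, a' i ≠ 0)
    (b : Fin 6 → ZMod d) :
    HasQuantumSolution d (magicSquareMatrix a a') b ↔
      ∃ x : Fin 9 → ZMod d, (magicSquareMatrix a a').mulVec x = b := by
  haveI : NeZero d := ⟨hd.ne_zero⟩
  haveI := Fact.mk hd
  constructor
  · rintro ⟨H, _, _, _, _, A, hApow, hAcomm, hArow⟩
    have hωd : rootOfUnity d ^ d = 1 := rootOfUnity_pow_d hd.ne_zero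
    set ω := rootOfUnity d with hωdef
    apply exists_solution_of_dual
    intro l hl
    have m00 : magicSquareMatrix a a' 0 0 = a 0 := rfl
    have m01 : magicSquareMatrix a a' 0 1 = a 1 := rfl
    have m02 : magicSquareMatrix a a' 0 2 = a 2 := rfl
    have m03 : magicSquareMatrix a a' 0 3 = 0 := rfl
    have m04 : magicSquareMatrix a a' 0 4 = 0 := rfl
    have m05 : magicSquareMatrix a a' 0 5 = 0 := rfl
    have m06 : magicSquareMatrix a a' 0 6 = 0 := rfl
    have m07 : magicSquareMatrix a a' 0 7 = 0 := rfl
    have m08 : magicSquareMatrix a a' 0 8 = 0 := rfl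
    have m10 : magicSquareMatrix a a' 1 0 = 0 := rfl
    have m11 : magicSquareMatrix a a' 1 1 = 0 := rfl
    have m12 : magicSquareMatrix a a' 1 2 = 0 := rfl
    have m13 : magicSquareMatrix a a' 1 3 = a 3 := rfl
    have m14 : magicSquareMatrix a a' 1 4 = a 4 := rfl
    have m15 : magicSquareMatrix a a' 1 5 = a 5 := rfl
    have m16 : magicSquareMatrix a a' 1 6 = 0 := rfl
    have m17 : magicSquareMatrix a a' 1 7 = 0 := rfl
    have m18 : magicSquareMatrix a a' 1 8 = 0 := rfl
    have m20 : magicSquareMatrix a a' 2 0 = 0 := rfl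
    have m21 : magicSquareMatrix a a' 2 1 = 0 := rfl
    have m22 : magicSquareMatrix a a' 2 2 = 0 := rfl
    have m23 : magicSquareMatrix a a' 2 3 = 0 := rfl
    have m24 : magicSquareMatrix a a' 2 4 = 0 := rfl
    have m25 : magicSquareMatrix a a' 2 5 = 0 := rfl
    have m26 : magicSquareMatrix a a' 2 6 = a 6 := rfl
    have m27 : magicSquareMatrix a a' 2 7 = a 7 := rfl
    have m28 : magicSquareMatrix a a' 2 8 = a 8 := rfl
    have m30 : magicSquareMatrix a a' 3 0 = a' 0 := rfl
    have m31 : magicSquareMatrix a a' 3 1 = 0 := rfl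
    have m32 : magicSquareMatrix a a' 3 2 = 0 := rfl
    have m33 : magicSquareMatrix a a' 3 3 = a' 3 := rfl
    have m34 : magicSquareMatrix a a' 3 4 = 0 := rfl
    have m35 : magicSquareMatrix a a' 3 5 = 0 := rfl
    have m36 : magicSquareMatrix a a' 3 6 = a' 6 := rfl
    have m37 : magicSquareMatrix a a' 3 7 = 0 := rfl
    have m38 : magicSquareMatrix a a' 3 8 = 0 := rfl
    have m40 : magicSquareMatrix a a' 4 0 = 0 := rfl
    have m41 : magicSquareMatrix a a' 4 1 = a' 1 := rfl
    have m42 : magicSquareMatrix a a' 4 2 = 0 := rfl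
    have m43 : magicSquareMatrix a a' 4 3 = 0 := rfl
    have m44 : magicSquareMatrix a a' 4 4 = a' 4 := rfl
    have m45 : magicSquareMatrix a a' 4 5 = 0 := rfl
    have m46 : magicSquareMatrix a a' 4 6 = 0 := rfl
    have m47 : magicSquareMatrix a a' 4 7 = a' 7 := rfl
    have m48 : magicSquareMatrix a a' 4 8 = 0 := rfl
    have m50 : magicSquareMatrix a a' 5 0 = 0 := rfl
    have m51 : magicSquareMatrix a a' 5 1 = 0 := rfl
    have m52 : magicSquareMatrix a a' 5 2 = a' 2 := rfl
    have m53 : magicSquareMatrix a a' 5 3 = 0 := rfl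
    have m54 : magicSquareMatrix a a' 5 4 = 0 := rfl
    have m55 : magicSquareMatrix a a' 5 5 = a' 5 := rfl
    have m56 : magicSquareMatrix a a' 5 6 = 0 := rfl
    have m57 : magicSquareMatrix a a' 5 7 = 0 := rfl
    have m58 : magicSquareMatrix a a' 5 8 = a' 8 := rfl

    have c01 : Commute (A 0) (A 1) := hAcomm 0 1 ⟨0, ha 0, ha 1⟩
    have c02 : Commute (A 0) (A 2) := hAcomm 0 2 ⟨0, ha 0, ha 2⟩
    have c12 : Commute (A 1) (A 2) := hAcomm 1 2 ⟨0, ha 1, ha 2⟩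
    have c34 : Commute (A 3) (A 4) := hAcomm 3 4 ⟨1, ha 3, ha 4⟩
    have c35 : Commute (A 3) (A 5) := hAcomm 3 5 ⟨1, ha 3, ha 5⟩
    have c45 : Commute (A 4) (A 5) := hAcomm 4 5 ⟨1, ha 4, ha 5⟩
    have c67 : Commute (A 6) (A 7) := hAcomm 6 7 ⟨2, ha 6, ha 7⟩
    have c68 : Commute (A 6) (A 8) := hAcomm 6 8 ⟨2, ha 6, ha 8⟩
    have c78 : Commute (A 7) (A 8) := hAcomm 7 8 ⟨2, ha 7, ha 8⟩
    have c03 : Commute (A 0) (A 3) := hAcomm 0 3 ⟨3, ha' 0, ha' 3⟩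
    have c06 : Commute (A 0) (A 6) := hAcomm 0 6 ⟨3, ha' 0, ha' 6⟩
    have c36 : Commute (A 3) (A 6) := hAcomm 3 6 ⟨3, ha' 3, ha' 6⟩
    have c14 : Commute (A 1) (A 4) := hAcomm 1 4 ⟨4, ha' 1, ha' 4⟩
    have c17 : Commute (A 1) (A 7) := hAcomm 1 7 ⟨4, ha' 1, ha' 7⟩
    have c47 : Commute (A 4) (A 7) := hAcomm 4 7 ⟨4, ha' 4, ha' 7⟩
    have c25 : Commute (A 2) (A 5) := hAcomm 2 5 ⟨5, ha' 2, ha' 5⟩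
    have c28 : Commute (A 2) (A 8) := hAcomm 2 8 ⟨5, ha' 2, ha' 8⟩
    have c58 : Commute (A 5) (A 8) := hAcomm 5 8 ⟨5, ha' 5, ha' 8⟩
    have hlst0 : (List.ofFn fun j => A j ^ ((magicSquareMatrix a a' : Matrix (Fin 6) (Fin 9) (ZMod d)) 0 j).val) = [A 0 ^ (a 0).val, A 1 ^ (a 1).val, A 2 ^ (a 2).val, 1, 1, 1, 1, 1, 1] := by
      rw [listOfFn_nine]
      simp only [m00, m01, m02, m03, m04, m05, m06, m07, m08, m10, m11, m12, m13, m14, m15, m16, m17, m18, m20, m21, m22, m23, m24, m25, m26, m27, m28, m30, m31, m32, m33, m34, m35, m36, m37, m38, m40, m41, m42, m43, m44, m45, m46, m47, m48, m50, m51, m52, m53, m54, m55, m56, m57, m58, ZMod.val_zero, pow_zero]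
    have rel0 : A 0 ^ (a 0).val * A 1 ^ (a 1).val * A 2 ^ (a 2).val
        = ω ^ (b 0).val • 1 := by
      have := hArow 0
      rw [hlst0] at this
      simpa [mul_assoc] using this
    have hlst1 : (List.ofFn fun j => A j ^ ((magicSquareMatrix a a' : Matrix (Fin 6) (Fin 9) (ZMod d)) 1 j).val) = [1, 1, 1, A 3 ^ (a 3).val, A 4 ^ (a 4).val, A 5 ^ (a 5).val, 1, 1, 1] := by
      rw [listOfFn_nine]
      simp only [m00, m01, m02, m03, m04, m05, m06, m07, m08, m10, m11, m12, m13, m14, m15, m16, m17, m18, m20, m21, m22, m23, m24, m25, m26, m27, m28, m30, m31, m32, m33, m34, m35, m36, m37, m38, m40, m41, m42, m43, m44, m45, m46, m47, m48, m50, m51, m52, m53, m54, m55, m56, m57, m58, ZMod.val_zero, pow_zero]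
    have rel1 : A 3 ^ (a 3).val * A 4 ^ (a 4).val * A 5 ^ (a 5).val
        = ω ^ (b 1).val • 1 := by
      have := hArow 1
      rw [hlst1] at this
      simpa [mul_assoc] using this
    have hlst2 : (List.ofFn fun j => A j ^ ((magicSquareMatrix a a' : Matrix (Fin 6) (Fin 9) (ZMod d)) 2 j).val) = [1, 1, 1, 1, 1, 1, A 6 ^ (a 6).val, A 7 ^ (a 7).val, A 8 ^ (a 8).val] := by
      rw [listOfFn_nine]
      simp only [m00, m01, m02, m03, m04, m05, m06, m07, m08, m10, m11, m12, m13, m14, m15, m16, m17, m18, m20, m21, m22, m23, m24, m25, m26, m27, m28, m30, m31, m32, m33, m34, m35, m36, m37, m38, m40, m41, m42, m43, m44, m45, m46, m47, m48, m50, m51, m52, m53, m54, m55, m56, m57, m58, ZMod.val_zero, pow_zero]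
    have rel2 : A 6 ^ (a 6).val * A 7 ^ (a 7).val * A 8 ^ (a 8).val
        = ω ^ (b 2).val • 1 := by
      have := hArow 2
      rw [hlst2] at this
      simpa [mul_assoc] using this
    have hlst3 : (List.ofFn fun j => A j ^ ((magicSquareMatrix a a' : Matrix (Fin 6) (Fin 9) (ZMod d)) 3 j).val) = [A 0 ^ (a' 0).val, 1, 1, A 3 ^ (a' 3).val, 1, 1, A 6 ^ (a' 6).val, 1, 1] := by
      rw [listOfFn_nine]
      simp only [m00, m01, m02, m03, m04, m05, m06, m07, m08, m10, m11, m12, m13, m14, m15, m16, m17, m18, m20, m21, m22, m23, m24, m25, m26, m27, m28, m30, m31, m32, m33, m34, m35, m36, m37, m38, m40, m41, m42, m43, m44, m45, m46, m47, m48, m50, m51, m52, m53, m54, m55, m56, m57, m58, ZMod.val_zero, pow_zero]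
    have rel3 : A 0 ^ (a' 0).val * A 3 ^ (a' 3).val * A 6 ^ (a' 6).val
        = ω ^ (b 3).val • 1 := by
      have := hArow 3
      rw [hlst3] at this
      simpa [mul_assoc] using this
    have hlst4 : (List.ofFn fun j => A j ^ ((magicSquareMatrix a a' : Matrix (Fin 6) (Fin 9) (ZMod d)) 4 j).val) = [1, A 1 ^ (a' 1).val, 1, 1, A 4 ^ (a' 4).val, 1, 1, A 7 ^ (a' 7).val, 1] := by
      rw [listOfFn_nine]
      simp only [m00, m01, m02, m03, m04, m05, m06, m07, m08, m10, m11, m12, m13, m14, m15, m16, m17, m18, m20, m21, m22, m23, m24, m25, m26, m27, m28, m30, m31, m32, m33, m34, m35, m36, m37, m38, m40, m41, m42, m43, m44, m45, m46, m47, m48, m50, m51, m52, m53, m54, m55, m56, m57, m58, ZMod.val_zero, pow_zero]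
    have rel4 : A 1 ^ (a' 1).val * A 4 ^ (a' 4).val * A 7 ^ (a' 7).val
        = ω ^ (b 4).val • 1 := by
      have := hArow 4
      rw [hlst4] at this
      simpa [mul_assoc] using this
    have hlst5 : (List.ofFn fun j => A j ^ ((magicSquareMatrix a a' : Matrix (Fin 6) (Fin 9) (ZMod d)) 5 j).val) = [1, 1, A 2 ^ (a' 2).val, 1, 1, A 5 ^ (a' 5).val, 1, 1, A 8 ^ (a' 8).val] := by
      rw [listOfFn_nine]
      simp only [m00, m01, m02, m03, m04, m05, m06, m07, m08, m10, m11, m12, m13, m14, m15, m16, m17, m18, m20, m21, m22, m23, m24, m25, m26, m27, m28, m30, m31, m32, m33, m34, m35, m36, m37, m38, m40, m41, m42, m43, m44, m45, m46, m47, m48, m50, m51, m52, m53, m54, m55, m56, m57, m58, ZMod.val_zero, pow_zero]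
    have rel5 : A 2 ^ (a' 2).val * A 5 ^ (a' 5).val * A 8 ^ (a' 8).val
        = ω ^ (b 5).val • 1 := by
      have := hArow 5
      rw [hlst5] at this
      simpa [mul_assoc] using this

    have k0 : l 0 * a 0 + l 3 * a' 0 = 0 := by
      have := congrFun hl 0
      simp only [Matrix.vecMul, dotProduct, Fin.sum_univ_six, m00, m01, m02, m03, m04, m05, m06, m07, m08, m10, m11, m12, m13, m14, m15, m16, m17, m18, m20, m21, m22, m23, m24, m25, m26, m27, m28, m30, m31, m32, m33, m34, m35, m36, m37, m38, m40, m41, m42, m43, m44, m45, m46, m47, m48, m50, m51, m52, m53, m54, m55, m56, m57, m58, Pi.zero_apply,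
        mul_zero, add_zero, zero_add] at this
      exact this
    have k1 : l 0 * a 1 + l 4 * a' 1 = 0 := by
      have := congrFun hl 1
      simp only [Matrix.vecMul, dotProduct, Fin.sum_univ_six, m00, m01, m02, m03, m04, m05, m06, m07, m08, m10, m11, m12, m13, m14, m15, m16, m17, m18, m20, m21, m22, m23, m24, m25, m26, m27, m28, m30, m31, m32, m33, m34, m35, m36, m37, m38, m40, m41, m42, m43, m44, m45, m46, m47, m48, m50, m51, m52, m53, m54, m55, m56, m57, m58, Pi.zero_apply,
        mul_zero, add_zero, zero_add] at this
      exact this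
    have k2 : l 0 * a 2 + l 5 * a' 2 = 0 := by
      have := congrFun hl 2
      simp only [Matrix.vecMul, dotProduct, Fin.sum_univ_six, m00, m01, m02, m03, m04, m05, m06, m07, m08, m10, m11, m12, m13, m14, m15, m16, m17, m18, m20, m21, m22, m23, m24, m25, m26, m27, m28, m30, m31, m32, m33, m34, m35, m36, m37, m38, m40, m41, m42, m43, m44, m45, m46, m47, m48, m50, m51, m52, m53, m54, m55, m56, m57, m58, Pi.zero_apply,
        mul_zero, add_zero, zero_add] at this
      exact this
    have k3 : l 1 * a 3 + l 3 * a' 3 = 0 := by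
      have := congrFun hl 3
      simp only [Matrix.vecMul, dotProduct, Fin.sum_univ_six, m00, m01, m02, m03, m04, m05, m06, m07, m08, m10, m11, m12, m13, m14, m15, m16, m17, m18, m20, m21, m22, m23, m24, m25, m26, m27, m28, m30, m31, m32, m33, m34, m35, m36, m37, m38, m40, m41, m42, m43, m44, m45, m46, m47, m48, m50, m51, m52, m53, m54, m55, m56, m57, m58, Pi.zero_apply,
        mul_zero, add_zero, zero_add] at this
      exact this
    have k4 : l 1 * a 4 + l 4 * a' 4 = 0 := by
      have := congrFun hl 4
      simp only [Matrix.vecMul, dotProduct, Fin.sum_univ_six, m00, m01, m02, m03, m04, m05, m06, m07, m08, m10, m11, m12, m13, m14, m15, m16, m17, m18, m20, m21, m22, m23, m24, m25, m26, m27, m28, m30, m31, m32, m33, m34, m35, m36, m37, m38, m40, m41, m42, m43, m44, m45, m46, m47, m48, m50, m51, m52, m53, m54, m55, m56, m57, m58, Pi.zero_apply,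
        mul_zero, add_zero, zero_add] at this
      exact this
    have k5 : l 1 * a 5 + l 5 * a' 5 = 0 := by
      have := congrFun hl 5
      simp only [Matrix.vecMul, dotProduct, Fin.sum_univ_six, m00, m01, m02, m03, m04, m05, m06, m07, m08, m10, m11, m12, m13, m14, m15, m16, m17, m18, m20, m21, m22, m23, m24, m25, m26, m27, m28, m30, m31, m32, m33, m34, m35, m36, m37, m38, m40, m41, m42, m43, m44, m45, m46, m47, m48, m50, m51, m52, m53, m54, m55, m56, m57, m58, Pi.zero_apply,
        mul_zero, add_zero, zero_add] at this
      exact this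
    have k6 : l 2 * a 6 + l 3 * a' 6 = 0 := by
      have := congrFun hl 6
      simp only [Matrix.vecMul, dotProduct, Fin.sum_univ_six, m00, m01, m02, m03, m04, m05, m06, m07, m08, m10, m11, m12, m13, m14, m15, m16, m17, m18, m20, m21, m22, m23, m24, m25, m26, m27, m28, m30, m31, m32, m33, m34, m35, m36, m37, m38, m40, m41, m42, m43, m44, m45, m46, m47, m48, m50, m51, m52, m53, m54, m55, m56, m57, m58, Pi.zero_apply,
        mul_zero, add_zero, zero_add] at this
      exact this
    have k7 : l 2 * a 7 + l 4 * a' 7 = 0 := by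
      have := congrFun hl 7
      simp only [Matrix.vecMul, dotProduct, Fin.sum_univ_six, m00, m01, m02, m03, m04, m05, m06, m07, m08, m10, m11, m12, m13, m14, m15, m16, m17, m18, m20, m21, m22, m23, m24, m25, m26, m27, m28, m30, m31, m32, m33, m34, m35, m36, m37, m38, m40, m41, m42, m43, m44, m45, m46, m47, m48, m50, m51, m52, m53, m54, m55, m56, m57, m58, Pi.zero_apply,
        mul_zero, add_zero, zero_add] at this
      exact this
    have k8 : l 2 * a 8 + l 5 * a' 8 = 0 := by
      have := congrFun hl 8
      simp only [Matrix.vecMul, dotProduct, Fin.sum_univ_six, m00, m01, m02, m03, m04, m05, m06, m07, m08, m10, m11, m12, m13, m14, m15, m16, m17, m18, m20, m21, m22, m23, m24, m25, m26, m27, m28, m30, m31, m32, m33, m34, m35, m36, m37, m38, m40, m41, m42, m43, m44, m45, m46, m47, m48, m50, m51, m52, m53, m54, m55, m56, m57, m58, Pi.zero_apply,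
        mul_zero, add_zero, zero_add] at this
      exact this
    let uA : Fin 9 → (H →L[ℂ] H)ˣ := fun v => mkUnit (A v) hd.pos (hApow v)
    have powmul : ∀ (v : Fin 9) (u t : ZMod d), (A v ^ u.val) ^ t.val = A v ^ (u * t).val := by
      intro v u t
      rw [← pow_mul]
      refine pow_eq_pow_of_cast_eq (hApow v) ?_
      push_cast [ZMod.natCast_val, ZMod.cast_id]
      ring
    let ζ : (H →L[ℂ] H)ˣ :=
      Units.map (algebraMap ℂ (H →L[ℂ] H)).toMonoidHom
        (Units.mk0 ω (hωdef ▸ rootOfUnity_ne_zero d))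
    have hζv : ∀ k : ℕ, ((ζ ^ k : (H →L[ℂ] H)ˣ) : H →L[ℂ] H) = ω ^ k • 1 := by
      intro k
      rw [Units.val_pow_eq_pow_val]
      show (algebraMap ℂ (H →L[ℂ] H) ω) ^ k = ω ^ k • 1
      rw [← map_pow]
      exact Algebra.algebraMap_eq_smul_one _
    have hζc : ∀ x : (H →L[ℂ] H)ˣ, Commute ζ x := by
      intro x
      exact Units.ext (Algebra.commutes ω (x : H →L[ℂ] H))
    have cU : ∀ (u v : Fin 9) (m n : ℕ), Commute (A u) (A v) →
        Commute (uA u ^ m) (uA v ^ n) := by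
      intro u v m n h
      have huv : Commute (uA u) (uA v) := Units.ext h
      exact Commute.pow_pow huv m n
    let g : Fin 3 → Fin 3 → (H →L[ℂ] H)ˣ :=
      ![![uA 0 ^ (a 0 * l 0).val, uA 1 ^ (a 1 * l 0).val, uA 2 ^ (a 2 * l 0).val],
        ![uA 3 ^ (a 3 * l 1).val, uA 4 ^ (a 4 * l 1).val, uA 5 ^ (a 5 * l 1).val],
        ![uA 6 ^ (a 6 * l 2).val, uA 7 ^ (a 7 * l 2).val, uA 8 ^ (a 8 * l 2).val]]
    have hrowU : ∀ i, g i 0 * g i 1 * g i 2 = ζ ^ (![(b 0 * l 0).val, (b 1 * l 1).val, (b 2 * l 2).val] i) := by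
      intro i
      fin_cases i
      · apply Units.ext
        show A 0 ^ (a 0 * l 0).val * A 1 ^ (a 1 * l 0).val * A 2 ^ (a 2 * l 0).val
            = ((ζ ^ (b 0 * l 0).val : (H →L[ℂ] H)ˣ) : H →L[ℂ] H)
        rw [hζv, ← powmul 0 (a 0) (l 0), ← powmul 1 (a 1) (l 0),
          ← powmul 2 (a 2) (l 0),
          raise3 (Commute.pow_pow c01 _ _) (Commute.pow_pow c02 _ _) (Commute.pow_pow c12 _ _) rel0 ((l 0).val),
          smul_pow, one_pow, ← pow_mul]
        congr 1
        refine pow_eq_pow_of_cast_eq hωd ?_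
        push_cast [ZMod.natCast_val, ZMod.cast_id]
        ring
      · apply Units.ext
        show A 3 ^ (a 3 * l 1).val * A 4 ^ (a 4 * l 1).val * A 5 ^ (a 5 * l 1).val
            = ((ζ ^ (b 1 * l 1).val : (H →L[ℂ] H)ˣ) : H →L[ℂ] H)
        rw [hζv, ← powmul 3 (a 3) (l 1), ← powmul 4 (a 4) (l 1),
          ← powmul 5 (a 5) (l 1),
          raise3 (Commute.pow_pow c34 _ _) (Commute.pow_pow c35 _ _) (Commute.pow_pow c45 _ _) rel1 ((l 1).val),
          smul_pow, one_pow, ← pow_mul]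
        congr 1
        refine pow_eq_pow_of_cast_eq hωd ?_
        push_cast [ZMod.natCast_val, ZMod.cast_id]
        ring
      · apply Units.ext
        show A 6 ^ (a 6 * l 2).val * A 7 ^ (a 7 * l 2).val * A 8 ^ (a 8 * l 2).val
            = ((ζ ^ (b 2 * l 2).val : (H →L[ℂ] H)ˣ) : H →L[ℂ] H)
        rw [hζv, ← powmul 6 (a 6) (l 2), ← powmul 7 (a 7) (l 2),
          ← powmul 8 (a 8) (l 2),
          raise3 (Commute.pow_pow c67 _ _) (Commute.pow_pow c68 _ _) (Commute.pow_pow c78 _ _) rel2 ((l 2).val),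
          smul_pow, one_pow, ← pow_mul]
        congr 1
        refine pow_eq_pow_of_cast_eq hωd ?_
        push_cast [ZMod.natCast_val, ZMod.cast_id]
        ring
    have hcolU : ∀ j, g 0 j * g 1 j * g 2 j = ζ ^ (![(b 3 * -l 3).val, (b 4 * -l 4).val, (b 5 * -l 5).val] j) := by
      intro j
      fin_cases j
      · apply Units.ext
        show A 0 ^ (a 0 * l 0).val * A 3 ^ (a 3 * l 1).val * A 6 ^ (a 6 * l 2).val
            = ((ζ ^ (b 3 * -l 3).val : (H →L[ℂ] H)ˣ) : H →L[ℂ] H)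
        have e0 : a 0 * l 0 = a' 0 * -l 3 := by linear_combination k0
        have e1 : a 3 * l 1 = a' 3 * -l 3 := by linear_combination k3
        have e2 : a 6 * l 2 = a' 6 * -l 3 := by linear_combination k6
        rw [hζv, e0, e1, e2, ← powmul 0 (a' 0) (-l 3), ← powmul 3 (a' 3) (-l 3),
          ← powmul 6 (a' 6) (-l 3),
          raise3 (Commute.pow_pow c03 _ _) (Commute.pow_pow c06 _ _) (Commute.pow_pow c36 _ _) rel3 ((-l 3).val),
          smul_pow, one_pow, ← pow_mul]
        congr 1
        refine pow_eq_pow_of_cast_eq hωd ?_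
        push_cast [ZMod.natCast_val, ZMod.cast_id]
        ring
      · apply Units.ext
        show A 1 ^ (a 1 * l 0).val * A 4 ^ (a 4 * l 1).val * A 7 ^ (a 7 * l 2).val
            = ((ζ ^ (b 4 * -l 4).val : (H →L[ℂ] H)ˣ) : H →L[ℂ] H)
        have e0 : a 1 * l 0 = a' 1 * -l 4 := by linear_combination k1
        have e1 : a 4 * l 1 = a' 4 * -l 4 := by linear_combination k4
        have e2 : a 7 * l 2 = a' 7 * -l 4 := by linear_combination k7
        rw [hζv, e0, e1, e2, ← powmul 1 (a' 1) (-l 4), ← powmul 4 (a' 4) (-l 4),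
          ← powmul 7 (a' 7) (-l 4),
          raise3 (Commute.pow_pow c14 _ _) (Commute.pow_pow c17 _ _) (Commute.pow_pow c47 _ _) rel4 ((-l 4).val),
          smul_pow, one_pow, ← pow_mul]
        congr 1
        refine pow_eq_pow_of_cast_eq hωd ?_
        push_cast [ZMod.natCast_val, ZMod.cast_id]
        ring
      · apply Units.ext
        show A 2 ^ (a 2 * l 0).val * A 5 ^ (a 5 * l 1).val * A 8 ^ (a 8 * l 2).val
            = ((ζ ^ (b 5 * -l 5).val : (H →L[ℂ] H)ˣ) : H →L[ℂ] H)
        have e0 : a 2 * l 0 = a' 2 * -l 5 := by linear_combination k2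
        have e1 : a 5 * l 1 = a' 5 * -l 5 := by linear_combination k5
        have e2 : a 8 * l 2 = a' 8 * -l 5 := by linear_combination k8
        rw [hζv, e0, e1, e2, ← powmul 2 (a' 2) (-l 5), ← powmul 5 (a' 5) (-l 5),
          ← powmul 8 (a' 8) (-l 5),
          raise3 (Commute.pow_pow c25 _ _) (Commute.pow_pow c28 _ _) (Commute.pow_pow c58 _ _) rel5 ((-l 5).val),
          smul_pow, one_pow, ← pow_mul]
        congr 1
        refine pow_eq_pow_of_cast_eq hωd ?_
        push_cast [ZMod.natCast_val, ZMod.cast_id]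
        ring
    have key := magic_key2 g ζ
      ![(b 0 * l 0).val, (b 1 * l 1).val, (b 2 * l 2).val]
      ![(b 3 * -l 3).val, (b 4 * -l 4).val, (b 5 * -l 5).val]
      hζc (cU 0 1 _ _ c01) (cU 3 4 _ _ c34) (cU 0 3 _ _ c03) (cU 1 4 _ _ c14)
      (cU 6 7 _ _ c67) (cU 2 5 _ _ c25) hrowU hcolU
    have keyval := congrArg (Units.val) key
    rw [hζv, hζv] at keyval
    obtain ⟨x0, hx0⟩ := exists_ne (0 : H)
    have hsc : ω ^ (2 * ((b 0 * l 0).val + (b 1 * l 1).val + (b 2 * l 2).val))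
        = ω ^ (2 * ((b 3 * -l 3).val + (b 4 * -l 4).val + (b 5 * -l 5).val)) := by
      have happ := congrArg (fun (f : H →L[ℂ] H) => f x0) keyval
      simp only [ContinuousLinearMap.smul_apply, ContinuousLinearMap.one_apply] at happ
      exact smul_left_injective ℂ hx0 happ
    have hcast : ((2 * ((b 0 * l 0).val + (b 1 * l 1).val + (b 2 * l 2).val) : ℕ) : ZMod d)
        = ((2 * ((b 3 * -l 3).val + (b 4 * -l 4).val + (b 5 * -l 5).val) : ℕ) : ZMod d) :=
      cast_eq_of_rootOfUnity_pow_eq hd.ne_zero (by rw [← hωdef]; exact hsc)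
    push_cast [ZMod.natCast_val, ZMod.cast_id] at hcast
    have h2ne : (2 : ZMod d) ≠ 0 := by
      intro h2
      have : ((2 : ℕ) : ZMod d) = 0 := by exact_mod_cast h2
      have hdvd := (ZMod.natCast_eq_zero_iff 2 d).1 this
      have := Nat.le_of_dvd (by norm_num) hdvd
      omega
    have hdot : (2 : ZMod d) * dotProduct l b = 0 := by
      simp only [dotProduct, Fin.sum_univ_six]
      linear_combination hcast
    exact (mul_eq_zero.1 hdot).resolve_left h2ne
  · rintro ⟨x, hx⟩
    exact hasQuantumSolution_of_classical d hd _ b x hx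
end
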